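/- Let T ∈ L(E) be invertible and W an orthogonally complemented reducing submodule for T. If 0 is not in the C*-numerical range ω(T) = {⟨Tx, x⟩ : x ∈ E, ‖x‖ = 1}, then W is a reducing submodule for T^{-1}. -/

import Mathlib

open scoped RightActions

/-- The December 2024 Mathlib `CStarModule` (right Hilbert C⋆-module, `SMul Aᵐᵒᵖ E`). -/
class CStarModuleOld (A E : Type*) [NonUnitalSemiring A] [StarRing A] [Module ℂ A]
    [AddCommGroup E] [Module ℂ E] [PartialOrder A] [SMul Aᵐᵒᵖ E] [Norm A] [Norm E]
    extends Inner A E where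
  inner_add_right {x} {y} {z} : inner x (y + z) = inner x y + inner x z
  inner_self_nonneg {x} : 0 ≤ inner x x
  inner_self {x} : inner x x = 0 ↔ x = 0
  inner_op_smul_right {a : A} {x y : E} : inner x (y <• a) = inner x y * a
  inner_smul_right_complex {z : ℂ} {x} {y} : inner x (z • y) = z • inner x y
  star_inner x y : star (inner x y) = inner y x
  norm_eq_sqrt_norm_inner_self x : ‖x‖ = √‖inner x x‖

section

variable {A : Type*} [CStarAlgebra A] [PartialOrder A] [StarOrderedRing A]
variable {E : Type*} [NormedAddCommGroup E] [NormedSpace ℂ E] [SMul Aᵐᵒᵖ E]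
  [CStarModuleOld A E] [CompleteSpace E]

local notation "⟪" x ", " y "⟫" => inner (𝕜 := A) x y

/-- `T` is a bounded adjointable `A`-linear operator with adjoint `T'`. -/
def IsAdjointableWith (T T' : E →L[ℂ] E) : Prop :=
  (∀ (a : A) (x : E), T (x <• a) = T x <• a) ∧
  ∀ x y : E, ⟪T x, y⟫ = ⟪x, T' y⟫

/-- The orthogonal complement of a subset of a Hilbert C*-module. -/
def ortho (W : Set E) : Set E := {y | ∀ x ∈ W, ⟪x, y⟫ = (0 : A)}

/-- `W` is orthogonally complemented in `E`. -/
def OrthoComplemented (W : Set E) : Prop :=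
  ∀ z : E, ∃ x ∈ W, ∃ y ∈ ortho (A := A) W, z = x + y

/-- `W` is a closed `A`-submodule of `E`. -/
def IsClosedSubmodule (W : Submodule ℂ E) : Prop :=
  IsClosed (W : Set E) ∧ ∀ (a : A), ∀ x ∈ W, x <• a ∈ W

/-- An orthogonal projection in `L(E)`: an `A`-linear, idempotent, self-adjoint operator. -/
def IsOrthoProjection (P : E →L[ℂ] E) : Prop :=
  (∀ (a : A) (x : E), P (x <• a) = P x <• a) ∧ P.comp P = P ∧
  ∀ x y : E, ⟪P x, y⟫ = ⟪x, P y⟫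

/-- A "compact" operator on a Hilbert C*-module: a member of the closure of the span
of the rank-one operators `z ↦ x ⟨y, z⟩`. -/
def IsCompactOp (K : E →L[ℂ] E) : Prop :=
  K ∈ closure (Submodule.span ℂ
    {S : E →L[ℂ] E | ∃ x y : E, ∀ z : E, S z = x <• ⟪y, z⟫} : Set (E →L[ℂ] E))

/-- `E` is a finitely generated Hilbert `A`-module. -/
def IsFinGen : Prop :=
  ∃ (n : ℕ) (g : Fin n → E), ∀ x : E,
    x ∈ Submodule.span ℂ {y : E | ∃ (i : Fin n) (a : A), y = g i <• a}

/-- `T` is invertible in `L(E)`, the bounded adjointable operators. -/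
def InvertibleInL (T : E →L[ℂ] E) : Prop :=
  ∃ S S' : E →L[ℂ] E, IsAdjointableWith (A := A) S S' ∧ S.comp T = 1 ∧ T.comp S = 1

/-- An element of both `W` and its orthogonal complement is zero. -/
lemma mem_inter_ortho_eq_zero {W : Set E} {z : E} (hz : z ∈ W)
    (hz' : z ∈ ortho (A := A) W) : z = 0 :=
  CStarModuleOld.inner_self (A := A).mp (hz' z hz)

/-- If `T` is invertible, `W` is an orthogonally complemented reducing submodule for `T`, and
`0` is not in the C*-numerical range of `T`, then `W` is a reducing submodule for `T⁻¹`. -/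
theorem stmt13 (T T' Tinv : E →L[ℂ] E) (hT : IsAdjointableWith (A := A) T T')
    (hinv1 : T.comp Tinv = 1) (hinv2 : Tinv.comp T = 1)
    (W : Submodule ℂ E) (hWcl : IsClosedSubmodule (A := A) W)
    (hWc : OrthoComplemented (A := A) (W : Set E))
    (hinvW : ∀ x ∈ W, T x ∈ W)
    (hinvW' : ∀ y ∈ ortho (A := A) (W : Set E), T y ∈ ortho (A := A) (W : Set E))
    (hnum : ∀ x : E, ‖x‖ = 1 → ⟪T x, x⟫ ≠ (0 : A)) :
    (∀ x ∈ W, Tinv x ∈ W) ∧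
    (∀ y ∈ ortho (A := A) (W : Set E), Tinv y ∈ ortho (A := A) (W : Set E)) := by
  have hTTinv : ∀ z : E, T (Tinv z) = z := fun z =>
    ContinuousLinearMap.ext_iff.mp hinv1 z
  have hTinvT : ∀ z : E, Tinv (T z) = z := fun z =>
    ContinuousLinearMap.ext_iff.mp hinv2 z
  constructor
  · intro x hx
    obtain ⟨u, hu, v, hv, huv⟩ := hWc (Tinv x)
    have hx' : x = T u + T v := by
      have := hTTinv x
      rw [huv, map_add] at this
      exact this.symm
    have hTv : T v ∈ ortho (A := A) (W : Set E) := hinvW' v hv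
    have hTvW : T v ∈ W := by
      have : T v = x - T u := by rw [hx']; abel
      rw [this]
      exact W.sub_mem hx (hinvW u hu)
    have hv0 : v = 0 := by
      have := mem_inter_ortho_eq_zero (A := A) hTvW hTv
      have := congrArg Tinv this
      rwa [hTinvT, map_zero] at this
    rw [huv, hv0, add_zero]
    exact hu
  · intro y hy
    obtain ⟨u, hu, v, hv, huv⟩ := hWc (Tinv y)
    have hy' : y = T u + T v := by
      have := hTTinv y
      rw [huv, map_add] at this
      exact this.symm
    have hTuW : T u ∈ W := hinvW u hu
    have hTu : T u ∈ ortho (A := A) (W : Set E) := by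
      intro x hx
      have h1 : ⟪x, y⟫ = (0 : A) := hy x hx
      have h2 : ⟪x, T v⟫ = (0 : A) := hinvW' v hv x hx
      have : ⟪x, y⟫ = ⟪x, T u⟫ + ⟪x, T v⟫ := by rw [hy', CStarModuleOld.inner_add_right]
      rw [h1, h2, add_zero] at this
      exact this.symm
    have hu0 : u = 0 := by
      have := mem_inter_ortho_eq_zero (A := A) hTuW hTu
      have := congrArg Tinv this
      rwa [hTinvT, map_zero] at this
    rw [huv, hu0, zero_add]
    exact hv

end
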